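/- Let A be a nilpotent n×n complex matrix, let v ∈ ℂⁿ be a column vector, and suppose that B = A + v eₙᵀ is also nilpotent. Then eₙᵀ Aⁱ v = 0 for every integer i ≥ 0. -/

import Mathlib

open Polynomial Matrix

lemma charpolyRev_eq_one_of_isNilpotent {n : Type*} [DecidableEq n] [Fintype n]
    {K : Type*} [Field K] {M : Matrix n n K} (hM : IsNilpotent M) :
    M.charpolyRev = 1 := by
  obtain ⟨r, -, hr⟩ := Polynomial.isUnit_iff.mp (M.isUnit_charpolyRev_of_isNilpotent hM)
  have h0 := M.eval_charpolyRev
  rw [← hr] at h0 ⊢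
  simp only [eval_C] at h0
  simp [h0]

/-- Let `A` be a nilpotent `n × n` complex matrix (indexed by `Fin (n+1)`),
`v ∈ ℂⁿ` a column vector, and suppose `B = A + v eₙᵀ` is also nilpotent, where
`eₙ = Pi.single (Fin.last n) 1` is the last standard basis vector, so that
`v eₙᵀ = Matrix.vecMulVec v eₙ`.  Then `eₙᵀ Aⁱ v = ((Aⁱ) v) (Fin.last n) = 0`
for every `i ≥ 0`. -/
theorem stmt_1 (n : ℕ) (A : Matrix (Fin (n + 1)) (Fin (n + 1)) ℂ)
    (v : Fin (n + 1) → ℂ)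
    (hA : IsNilpotent A)
    (hB : IsNilpotent (A + Matrix.vecMulVec v (Pi.single (Fin.last n) 1))) :
    ∀ i : ℕ, Matrix.mulVec (A ^ i) v (Fin.last n) = 0 := by
  classical
  obtain ⟨m, hm⟩ := hA
  set N : Matrix (Fin (n + 1)) (Fin (n + 1)) ℂ[X] := (X : ℂ[X]) • A.map C with hN
  set S : Matrix (Fin (n + 1)) (Fin (n + 1)) ℂ[X] := ∑ i ∈ Finset.range m, N ^ i with hSdef
  have hmapA : ∀ k : ℕ, (A.map C) ^ k = (A ^ k).map C := by
    intro k
    have : (A.map C) = (C : ℂ →+* ℂ[X]).mapMatrix A := rfl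
    rw [this, ← map_pow]
    rfl
  have hNm : N ^ m = 0 := by
    rw [hN, _root_.smul_pow, hmapA, hm]
    simp
  have hS1 : S * (1 - N) = 1 := by
    have h1 := geom_sum_mul N m
    rw [hNm, zero_sub] at h1
    have h2 : S * (N - 1) = -1 := by rw [hSdef]; exact h1
    have h3 : S * (1 - N) = -(S * (N - 1)) := by noncomm_ring
    rw [h3, h2, neg_neg]
  have hS2 : (1 - N) * S = 1 := mul_eq_one_comm.mp hS1
  set e : Fin (n + 1) → ℂ := Pi.single (Fin.last n) 1 with he
  set w : Fin (n + 1) → ℂ[X] := fun i => X * C (v i) with hw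
  set e' : Fin (n + 1) → ℂ[X] := Pi.single (Fin.last n) 1 with he'
  have hvmv : (X : ℂ[X]) • (Matrix.vecMulVec v e).map C
      = Matrix.replicateCol Unit w * Matrix.replicateRow Unit e' := by
    rw [← Matrix.vecMulVec_eq Unit]
    refine Matrix.ext fun i j => ?_
    simp only [Matrix.smul_apply, Matrix.map_apply, Matrix.vecMulVec_apply, _root_.map_mul,
      smul_eq_mul, hw, he, he']
    rcases eq_or_ne j (Fin.last n) with h | h
    · subst h; simp
    · simp [h]
  have hfac : (1 : Matrix (Fin (n+1)) (Fin (n+1)) ℂ[X]) - N - Matrix.replicateCol Unit w * Matrix.replicateRow Unit e'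
      = (1 - N) * (1 - Matrix.replicateCol Unit (S *ᵥ w) * Matrix.replicateRow Unit e') := by
    rw [Matrix.mul_sub, mul_one, ← Matrix.mul_assoc, ← Matrix.replicateCol_mulVec,
      Matrix.mulVec_mulVec, hS2]
    simp
  have hdetA : (1 - N).det = 1 := by
    have := charpolyRev_eq_one_of_isNilpotent (M := A) ⟨m, hm⟩
    rwa [Matrix.charpolyRev] at this
  have hdetB : ((1 : Matrix (Fin (n+1)) (Fin (n+1)) ℂ[X]) - N
      - Matrix.replicateCol Unit w * Matrix.replicateRow Unit e').det = 1 := by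
    have h1 := charpolyRev_eq_one_of_isNilpotent hB
    rw [Matrix.charpolyRev] at h1
    rw [← h1]
    congr 1
    have hBmap : (A + Matrix.vecMulVec v e).map C
        = A.map C + (Matrix.vecMulVec v e).map C := by
      refine Matrix.ext fun i j => ?_
      simp [Matrix.map_apply]
    rw [hBmap, smul_add, hvmv, hN, sub_sub]
  have hdet2 : (1 - Matrix.replicateCol Unit (S *ᵥ w) * Matrix.replicateRow Unit e').det
      = 1 - e' ⬝ᵥ (S *ᵥ w) := by
    have h1 : (1 : Matrix (Fin (n+1)) (Fin (n+1)) ℂ[X])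
        - Matrix.replicateCol Unit (S *ᵥ w) * Matrix.replicateRow Unit e'
        = 1 + Matrix.replicateCol Unit (-(S *ᵥ w)) * Matrix.replicateRow Unit e' := by
      refine Matrix.ext fun i j => ?_
      simp [Matrix.mul_apply]
      ring
    rw [h1, Matrix.det_one_add_replicateCol_mul_replicateRow]
    simp [sub_eq_add_neg]
  have hkey : e' ⬝ᵥ (S *ᵥ w) = 0 := by
    have h1 := hdetB
    rw [hfac, Matrix.det_mul, hdetA, one_mul, hdet2] at h1
    linear_combination -h1
  have hterm : ∀ i : ℕ, e' ⬝ᵥ ((N ^ i) *ᵥ w)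
      = Polynomial.monomial (i + 1) (((A ^ i) *ᵥ v) (Fin.last n)) := by
    intro i
    rw [he', single_dotProduct, one_mul]
    rw [hN, _root_.smul_pow, hmapA]
    simp only [Matrix.smul_mulVec, Pi.smul_apply, smul_eq_mul]
    rw [← C_mul_X_pow_eq_monomial]
    have h2 : ((A ^ i).map C *ᵥ w) (Fin.last n)
        = X * C (((A ^ i) *ᵥ v) (Fin.last n)) := by
      simp only [Matrix.mulVec, dotProduct, Matrix.map_apply, hw]
      rw [map_sum, Finset.mul_sum]
      refine Finset.sum_congr rfl fun j _ => ?_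
      rw [_root_.map_mul]; ring
    rw [h2]; ring
  have hsum : e' ⬝ᵥ (S *ᵥ w) = ∑ i ∈ Finset.range m,
      Polynomial.monomial (i + 1) (((A ^ i) *ᵥ v) (Fin.last n)) := by
    have hsmul : S *ᵥ w = ∑ i ∈ Finset.range m, (N ^ i) *ᵥ w := by
      funext j
      rw [hSdef]
      simp only [Matrix.mulVec, dotProduct, Finset.sum_apply, Matrix.sum_apply,
        Finset.sum_mul]
      rw [Finset.sum_comm]
    rw [hsmul, he', single_dotProduct, one_mul, Finset.sum_apply]
    refine Finset.sum_congr rfl fun i _ => ?_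
    rw [← hterm i, he', single_dotProduct, one_mul]
  have hzero : ∀ i < m, ((A ^ i) *ᵥ v) (Fin.last n) = 0 := by
    intro i hi
    have h := hkey
    rw [hsum] at h
    have h3 := congrArg (fun p => Polynomial.coeff p (i + 1)) h
    simp only [Polynomial.finset_sum_coeff, Polynomial.coeff_monomial,
      Polynomial.coeff_zero] at h3
    simp only [add_left_inj] at h3
    rwa [Finset.sum_ite_eq' (Finset.range m) i, if_pos (Finset.mem_range.mpr hi)] at h3
  intro i
  rcases lt_or_ge i m with h | h
  · exact hzero i h
  · have h0 : A ^ i = 0 := by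
      rw [← Nat.sub_add_cancel h, pow_add, hm]
      simp
    simp [h0]
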